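/- Double Q-learning's evaluation-by-second-network eliminates one-sided bias for independent estimators: if X, Y : Ω → ℝ^n are independent random vectors with E[Y_i] = q_i for all i, and a*(ω) = argmax_i X_i(ω) (any measurable selection), then E[Y_{a*}] = E[q_{a*}] ≤ max_i q_i, in contrast with E[max_i X_i] ≥ max_i E[X_i]. -/

import Mathlib

open Finset MeasureTheory

/-- Double Q-learning's evaluation-by-second-network eliminates one-sided bias for
independent estimators: if `X, Y : Ω → ℝ^n` are independent, `E[Y_i] = q_i`, and
`a*(ω)` is a measurable argmax selection of `X`, then
`E[Y_{a*}] = E[q_{a*}] ≤ max_i q_i`. -/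
theorem double_q_learning_no_overestimation
    {Ω : Type*} [MeasureSpace Ω] (hP : IsProbabilityMeasure (volume : Measure Ω))
    {n : ℕ} [NeZero n]
    (X Y : Ω → Fin n → ℝ) (hXm : Measurable X) (hYm : Measurable Y)
    (hindep : ProbabilityTheory.IndepFun X Y)
    (q : Fin n → ℝ)
    (hYint : ∀ i, Integrable fun ω => Y ω i)
    (hq : ∀ i, (∫ ω, Y ω i) = q i)
    (astar : Ω → Fin n)
    (hargmax : ∀ ω i, X ω i ≤ X ω (astar ω))
    (hmeas : ∃ g : (Fin n → ℝ) → Fin n, Measurable g ∧ astar = g ∘ X)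
    (hint : Integrable fun ω => Y ω (astar ω)) :
    (∫ ω, Y ω (astar ω)) = (∫ ω, q (astar ω)) ∧
      (∫ ω, q (astar ω)) ≤ univ.sup' univ_nonempty fun i => q i := by
  obtain ⟨g, hg, hga⟩ := hmeas
  -- indicator functions
  set f : Fin n → Ω → ℝ := fun i ω => if astar ω = i then (1 : ℝ) else 0 with hf
  have hfmeas : ∀ i, Measurable (f i) := by
    intro i
    have : f i = (fun v => if g v = i then (1 : ℝ) else 0) ∘ X := by
      funext ω; simp [hf, hga, Function.comp]
    rw [this]
    exact (Measurable.ite (hg (measurableSet_singleton i)) measurable_const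
      measurable_const).comp hXm
  have hfbdd : ∀ i ω, ‖f i ω‖ ≤ 1 := by
    intro i ω; simp only [hf]; split <;> simp
  have hfint : ∀ i, Integrable (f i) := fun i =>
    Integrable.mono' (integrable_const 1) (hfmeas i).aestronglyMeasurable
      (Filter.Eventually.of_forall fun ω => hfbdd i ω)
  have hindep' : ∀ i, ProbabilityTheory.IndepFun (f i) (fun ω => Y ω i) := by
    intro i
    have : f i = (fun v => if g v = i then (1 : ℝ) else 0) ∘ X := by
      funext ω; simp [hf, hga, Function.comp]
    rw [this]
    exact hindep.comp
      (Measurable.ite (hg (measurableSet_singleton i)) measurable_const measurable_const)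
      (measurable_pi_apply i)
  -- pointwise decompositions
  have hYdec : ∀ ω, Y ω (astar ω) = ∑ i, f i ω * Y ω i := by
    intro ω
    simp only [hf, ite_mul, one_mul, zero_mul]
    rw [Finset.sum_ite_eq (univ) (astar ω) (fun i => Y ω i)]
    simp
  have hqdec : ∀ ω, q (astar ω) = ∑ i, f i ω * q i := by
    intro ω
    simp only [hf, ite_mul, one_mul, zero_mul]
    rw [Finset.sum_ite_eq (univ) (astar ω) q]
    simp
  have hprodint : ∀ i, Integrable (fun ω => f i ω * Y ω i) := fun i =>
    (hYint i).bdd_mul (hfmeas i).aestronglyMeasurable (c := 1)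
      (Filter.Eventually.of_forall (hfbdd i))
  have hqint : Integrable (fun ω => q (astar ω)) := by
    have : (fun ω => q (astar ω)) = fun ω => ∑ i, f i ω * q i := funext hqdec
    rw [this]
    exact integrable_finset_sum _ fun i _ => (hfint i).mul_const (q i)
  constructor
  · calc (∫ ω, Y ω (astar ω)) = ∫ ω, ∑ i, f i ω * Y ω i := by
          congr 1; exact funext hYdec
      _ = ∑ i, ∫ ω, f i ω * Y ω i :=
          integral_finset_sum _ fun i _ => hprodint i
      _ = ∑ i, (∫ ω, f i ω) * q i := by
          refine Finset.sum_congr rfl fun i _ => ?_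
          have h := ProbabilityTheory.IndepFun.integral_mul_eq_mul_integral (hindep' i)
            (hfint i).aestronglyMeasurable (hYint i).aestronglyMeasurable
          simp only [Pi.mul_apply] at h
          rw [h, hq i]
      _ = ∑ i, ∫ ω, f i ω * q i := by
          refine Finset.sum_congr rfl fun i _ => ?_
          rw [integral_mul_const]
      _ = ∫ ω, ∑ i, f i ω * q i :=
          (integral_finset_sum _ fun i _ => (hfint i).mul_const (q i)).symm
      _ = ∫ ω, q (astar ω) := by congr 1; exact (funext hqdec).symm
  · calc (∫ ω, q (astar ω)) ≤ ∫ _ : Ω, univ.sup' univ_nonempty fun i => q i := by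
          refine integral_mono hqint (integrable_const _) fun ω => ?_
          exact Finset.le_sup' _ (Finset.mem_univ (astar ω))
      _ = univ.sup' univ_nonempty fun i => q i := by
          simp [integral_const]
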